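/- Let n be a nonnegative integer, d > 0, a and c real, and set κ = 1 + c/√(2d) and B = a/(n + κ), assuming n + κ ≠ 0. Then for every twice continuously differentiable function y : ℝ → ℝ and every x ∈ ℝ, x²·y″(x) + 2(Bx² + κx + √(2d))·y′(x) − 2nB·x·y(x) = (J⁰J⁰y)(x) − 2B·(J⁺y)(x) + (n + 1 + 2c/√(2d))·(J⁰y)(x) + 2√(2d)·(J⁻y)(x) + (n/4)·(n + 2 + 4c/√(2d))·y(x). -/

import Mathlib

/-- `(J⁺y)(x) = -x²y'(x) + n x y(x)` -/
noncomputable def Jp (n : ℕ) (y : ℝ → ℝ) : ℝ → ℝ :=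
  fun x => -x ^ 2 * deriv y x + (n : ℝ) * x * y x

/-- `(J⁰y)(x) = x y'(x) - (n/2) y(x)` -/
noncomputable def J0 (n : ℕ) (y : ℝ → ℝ) : ℝ → ℝ :=
  fun x => x * deriv y x - ((n : ℝ) / 2) * y x

/-- `(J⁻y)(x) = y'(x)` -/
noncomputable def Jm (y : ℝ → ℝ) : ℝ → ℝ := fun x => deriv y x

/-- sl(2) algebraization of the Stäckel-transformed Hamiltonian of the
inverse quartic power potential, with `κ = 1 + c/√(2d)`, `B = a/(n + κ)`. -/
theorem inverse_quartic_sl2 (n : ℕ) (d a c : ℝ) (hd : 0 < d)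
    (κ B : ℝ) (hκ : κ = 1 + c / Real.sqrt (2 * d))
    (hne : (n : ℝ) + κ ≠ 0) (hB : B = a / ((n : ℝ) + κ))
    (y : ℝ → ℝ) (hy : ContDiff ℝ 2 y) (x : ℝ) :
    x ^ 2 * deriv (deriv y) x
      + 2 * (B * x ^ 2 + κ * x + Real.sqrt (2 * d)) * deriv y x
      - 2 * (n : ℝ) * B * x * y x
    = J0 n (J0 n y) x - 2 * B * Jp n y x
      + ((n : ℝ) + 1 + 2 * c / Real.sqrt (2 * d)) * J0 n y x
      + 2 * Real.sqrt (2 * d) * Jm y x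
      + ((n : ℝ) / 4) * ((n : ℝ) + 2 + 4 * c / Real.sqrt (2 * d)) * y x := by
  have hs : Real.sqrt (2 * d) ≠ 0 := by positivity
  have hc : c = (κ - 1) * Real.sqrt (2 * d) := by
    rw [hκ]; field_simp; ring
  have hdy : Differentiable ℝ y := hy.differentiable (by norm_num)
  have hdy' : Differentiable ℝ (deriv y) :=
    (hy.iterate_deriv' 1 1).differentiable (by norm_num)
  have hJ0 : deriv (J0 n y) x
      = deriv y x + x * deriv (deriv y) x - ((n : ℝ) / 2) * deriv y x := by
    unfold J0
    rw [deriv_fun_sub (f := fun x => x * deriv y x) (g := fun x => (n : ℝ) / 2 * y x) ((differentiable_fun_id.mul hdy') x) ((differentiable_const _).mul hdy x),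
      deriv_fun_mul differentiable_fun_id.differentiableAt (hdy' x),
      deriv_const_mul _ (hdy x)]
    simp
  simp only [J0, Jp, Jm, hJ0, hc]
  field_simp
  ring
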